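/- Let G be a simple graph on vertices v_1, …, v_n with n even, possessing a Hamiltonian cycle v_1 v_2 ⋯ v_n v_1, and let G' be the graph obtained from G by adding, for each i, two new vertices x_{i1}, x_{i2} with the triangle edges v_i x_{i1}, x_{i1} x_{i2}, x_{i2} v_i, and adding the edges x_{i2} x_{(i+1)1} for each odd i. Then G' is Hamiltonian, and the maximum degree of G' is at most Δ(G) + 2. -/

import Mathlib

/-- A conditional `(k,r)`-coloring (with color type `α` of size `k`):
(C1) adjacent vertices get different colors, and
(C2) every vertex `v` sees at least `min (d v) r` distinct colors on its neighborhood. -/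
def IsCondColoring {V α : Type*} (G : SimpleGraph V) (r : ℕ) (c : V → α) : Prop :=
  (∀ ⦃u v : V⦄, G.Adj u v → c u ≠ c v) ∧
  ∀ v : V, min (G.neighborSet v).ncard r ≤ (c '' G.neighborSet v).ncard

/-- The `r`-th order conditional chromatic number `χ_r(G)`. -/
noncomputable def condChromaticNumber {V : Type*} (G : SimpleGraph V) (r : ℕ) : ℕ∞ :=
  ⨅ k ∈ {k : ℕ | ∃ c : V → Fin k, IsCondColoring G r c}, (k : ℕ∞)

/-- The graph `G'` obtained from `G` (on vertices `v_0, …, v_{n-1}`) by attaching to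
each `v_u` a triangle `{v_u, x_{u,1}, x_{u,2}}` on two new vertices (encoded as
`(u, 0)` and `(u, 1)`), and adding the edge `x_{u,2} x_{u+1,1}` for each even `u`
(i.e. `x_{i2} x_{(i+1)1}` for odd `i` in `1`-based indexing). -/
def attachTriangles {n : ℕ} (G : SimpleGraph (Fin n)) :
    SimpleGraph (Fin n ⊕ Fin n × Fin 2) :=
  SimpleGraph.fromRel (fun a b =>
    match a, b with
    | Sum.inl u, Sum.inl v => G.Adj u v
    | Sum.inl u, Sum.inr (v, _) => u = v
    | Sum.inr (u, _), Sum.inl v => u = v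
    | Sum.inr (u, i), Sum.inr (v, j) =>
        u = v ∨ ((u : ℕ) % 2 = 0 ∧ (v : ℕ) = (u : ℕ) + 1 ∧ i = 1 ∧ j = 0))

section AuxStmt13
open SimpleGraph


open SimpleGraph

/-! ### Auxiliary lemmas for `stmt_13` -/

private def walkDown {m : ℕ} : (k : ℕ) → (h : k < m) →
    (cycleGraph m).Walk ⟨k, h⟩ ⟨0, Nat.lt_of_le_of_lt (Nat.zero_le k) h⟩
  | 0, _ => Walk.nil
  | k+1, h => Walk.cons (by
      rw [cycleGraph_adj']
      left
      simp only [Fin.sub_def, Fin.val_mk]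
      have h2 : m - k + (k + 1) = m + 1 := by omega
      rw [h2, Nat.add_mod_left, Nat.mod_eq_of_lt (by omega)]) (walkDown k (Nat.lt_of_succ_lt h))

private lemma mem_support_walkDown {m : ℕ} : ∀ (k : ℕ) (h : k < m) (x : Fin m),
    x ∈ (walkDown k h).support ↔ x.val ≤ k := by
  intro k
  induction k with
  | zero => intro h x; simp [walkDown, Fin.ext_iff]
  | succ k ih =>
    intro h x
    simp only [walkDown, Walk.support_cons, List.mem_cons, ih (Nat.lt_of_succ_lt h) x,
      Fin.ext_iff, Fin.val_mk]
    omega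

private lemma nodup_support_walkDown {m : ℕ} : ∀ (k : ℕ) (h : k < m),
    (walkDown k h).support.Nodup := by
  intro k
  induction k with
  | zero => intro h; simp [walkDown]
  | succ k ih =>
    intro h
    rw [walkDown, Walk.support_cons, List.nodup_cons]
    refine ⟨?_, ih _⟩
    rw [mem_support_walkDown]
    simp only [Fin.val_mk]
    omega

private lemma edge_not_mem_walkDown {m : ℕ} (hm : 3 ≤ m) (u v : Fin m) (hu : u.val = 0)
    (hv : v.val = m - 1) : ∀ (k : ℕ) (h : k < m), s(u, v) ∉ (walkDown k h).edges := by
  intro k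
  induction k with
  | zero => intro h; simp [walkDown]
  | succ k ih =>
    intro h
    rw [walkDown, Walk.edges_cons, List.mem_cons]
    rintro (he | he)
    · rw [Sym2.eq_iff] at he
      rcases he with ⟨h1, h2⟩ | ⟨h1, h2⟩ <;> rw [Fin.ext_iff] at h1 h2 <;>
        simp only [Fin.val_mk] at h1 h2 <;> omega
    · exact ih _ he

private lemma cycleGraph_hamCycle (m : ℕ) (hm : 3 ≤ m) :
    ∃ (a : Fin m) (p : (cycleGraph m).Walk a a), p.IsHamiltonianCycle := by
  have h0 : 0 < m := by omega
  have hm1 : m - 1 < m := by omega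
  have hadj : (cycleGraph m).Adj ⟨0, h0⟩ ⟨m - 1, hm1⟩ := by
    rw [cycleGraph_adj']
    left
    simp only [Fin.sub_def, Fin.val_mk]
    have h2 : m - (m - 1) + 0 = 1 := by omega
    rw [h2, Nat.mod_eq_of_lt (by omega)]
  refine ⟨⟨0, h0⟩, Walk.cons hadj (walkDown (m-1) hm1), ?_⟩
  rw [Walk.isHamiltonianCycle_iff_isCycle_and_support_count_tail_eq_one]
  constructor
  · rw [Walk.cons_isCycle_iff]
    refine ⟨Walk.isPath_def _ |>.mpr (nodup_support_walkDown _ _), ?_⟩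
    exact edge_not_mem_walkDown hm _ _ rfl rfl _ _
  · intro a
    rw [Walk.support_cons]
    simp only [List.tail_cons]
    refine List.count_eq_one_of_mem (nodup_support_walkDown _ _) ?_
    rw [mem_support_walkDown]
    omega

private def toV {n : ℕ} (k : Fin (3 * n)) : Fin n ⊕ Fin n × Fin 2 :=
  if _ : k.val % 6 = 0 then Sum.inl ⟨2 * (k.val / 6), by have := k.isLt; omega⟩
  else if _ : k.val % 6 = 1 then Sum.inr (⟨2 * (k.val / 6), by have := k.isLt; omega⟩, 0)
  else if _ : k.val % 6 = 2 then Sum.inr (⟨2 * (k.val / 6), by have := k.isLt; omega⟩, 1)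
  else if _ : k.val % 6 = 3 then Sum.inr (⟨2 * (k.val / 6) + 1, by have := k.isLt; omega⟩, 0)
  else if _ : k.val % 6 = 4 then Sum.inr (⟨2 * (k.val / 6) + 1, by have := k.isLt; omega⟩, 1)
  else Sum.inl ⟨2 * (k.val / 6) + 1, by have := k.isLt; omega⟩

private lemma toV0 {n : ℕ} (k : Fin (3 * n)) (h : k.val % 6 = 0) :
    toV k = Sum.inl ⟨2 * (k.val / 6), by have := k.isLt; omega⟩ := by
  simp only [toV]; rw [dif_pos h]
private lemma toV1 {n : ℕ} (k : Fin (3 * n)) (h : k.val % 6 = 1) :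
    toV k = Sum.inr (⟨2 * (k.val / 6), by have := k.isLt; omega⟩, 0) := by
  simp only [toV]; rw [dif_neg (by omega), dif_pos h]
private lemma toV2 {n : ℕ} (k : Fin (3 * n)) (h : k.val % 6 = 2) :
    toV k = Sum.inr (⟨2 * (k.val / 6), by have := k.isLt; omega⟩, 1) := by
  simp only [toV]; rw [dif_neg (by omega), dif_neg (by omega), dif_pos h]
private lemma toV3 {n : ℕ} (k : Fin (3 * n)) (h : k.val % 6 = 3) :
    toV k = Sum.inr (⟨2 * (k.val / 6) + 1, by have := k.isLt; omega⟩, 0) := by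
  simp only [toV]
  rw [dif_neg (by omega), dif_neg (by omega), dif_neg (by omega), dif_pos h]
private lemma toV4 {n : ℕ} (k : Fin (3 * n)) (h : k.val % 6 = 4) :
    toV k = Sum.inr (⟨2 * (k.val / 6) + 1, by have := k.isLt; omega⟩, 1) := by
  simp only [toV]
  rw [dif_neg (by omega), dif_neg (by omega), dif_neg (by omega), dif_neg (by omega), dif_pos h]
private lemma toV5 {n : ℕ} (k : Fin (3 * n)) (h : k.val % 6 = 5) :
    toV k = Sum.inl ⟨2 * (k.val / 6) + 1, by have := k.isLt; omega⟩ := by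
  simp only [toV]
  rw [dif_neg (by omega), dif_neg (by omega), dif_neg (by omega), dif_neg (by omega),
    dif_neg (by omega)]

private lemma toV_surjective {n : ℕ} : Function.Surjective (toV (n := n)) := by
  rintro (u | ⟨u, i⟩)
  · rcases Nat.even_or_odd u.val with he | ho
    · rw [Nat.even_iff] at he
      refine ⟨⟨6 * (u.val / 2), by have := u.isLt; omega⟩, ?_⟩
      rw [toV0 _ (by simp only [Fin.val_mk]; omega)]
      simp only [Sum.inl.injEq, Fin.ext_iff, Fin.val_mk]
      omega
    · rw [Nat.odd_iff] at ho
      refine ⟨⟨6 * (u.val / 2) + 5, by have := u.isLt; omega⟩, ?_⟩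
      rw [toV5 _ (by simp only [Fin.val_mk]; omega)]
      simp only [Sum.inl.injEq, Fin.ext_iff, Fin.val_mk]
      omega
  · rcases Nat.even_or_odd u.val with he | ho <;>
      [rw [Nat.even_iff] at he; rw [Nat.odd_iff] at ho] <;> fin_cases i
    · refine ⟨⟨6 * (u.val / 2) + 1, by have := u.isLt; omega⟩, ?_⟩
      rw [toV1 _ (by simp only [Fin.val_mk]; omega)]
      simp only [Sum.inr.injEq, Prod.mk.injEq, Fin.ext_iff, Fin.val_mk]
      exact ⟨by omega, rfl⟩
    · refine ⟨⟨6 * (u.val / 2) + 2, by have := u.isLt; omega⟩, ?_⟩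
      rw [toV2 _ (by simp only [Fin.val_mk]; omega)]
      simp only [Sum.inr.injEq, Prod.mk.injEq, Fin.ext_iff, Fin.val_mk]
      exact ⟨by omega, rfl⟩
    · refine ⟨⟨6 * (u.val / 2) + 3, by have := u.isLt; omega⟩, ?_⟩
      rw [toV3 _ (by simp only [Fin.val_mk]; omega)]
      simp only [Sum.inr.injEq, Prod.mk.injEq, Fin.ext_iff, Fin.val_mk]
      exact ⟨by omega, rfl⟩
    · refine ⟨⟨6 * (u.val / 2) + 4, by have := u.isLt; omega⟩, ?_⟩
      rw [toV4 _ (by simp only [Fin.val_mk]; omega)]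
      simp only [Sum.inr.injEq, Prod.mk.injEq, Fin.ext_iff, Fin.val_mk]
      exact ⟨by omega, rfl⟩

private lemma toV_bijective {n : ℕ} : Function.Bijective (toV (n := n)) := by
  rw [Fintype.bijective_iff_surjective_and_card]
  refine ⟨toV_surjective, ?_⟩
  simp [Fintype.card_sum, Fintype.card_prod]
  ring

private lemma hham' {n : ℕ} {G : SimpleGraph (Fin n)} (hn3 : 3 ≤ n)
    (hham : ∀ i : Fin n, G.Adj i (i + ⟨1, Nat.lt_of_lt_of_le (by decide) hn3⟩)) (a b : Fin n)
    (hab : b.val = (a.val + 1) % n) : G.Adj a b := by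
  have := hham a
  convert this using 1
  apply Fin.ext
  rw [hab, Fin.add_def]

private lemma fin_sub_one_cases {m : ℕ} (u v : Fin m) (h : (u - v).val = 1) :
    u.val = v.val + 1 ∨ (v.val = m - 1 ∧ u.val = 0) := by
  have hu := u.isLt
  have hv := v.isLt
  rw [Fin.sub_def] at h
  simp only [Fin.val_mk] at h
  rcases Nat.lt_or_ge (m - v.val + u.val) m with h' | h'
  · rw [Nat.mod_eq_of_lt h'] at h
    omega
  · rw [Nat.mod_eq_sub_mod h', Nat.mod_eq_of_lt (by omega)] at h
    omega

private lemma adj_toV_succ {n : ℕ} (hn3 : 3 ≤ n) (hn : Even n) {G : SimpleGraph (Fin n)}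
    (hham : ∀ i : Fin n, G.Adj i (i + ⟨1, Nat.lt_of_lt_of_le (by decide) hn3⟩)) (u v : Fin (3 * n))
    (h : v.val = u.val + 1 ∨ (u.val = 3 * n - 1 ∧ v.val = 0)) :
    (attachTriangles G).Adj (toV u) (toV v) := by
  have hu := u.isLt
  have hv := v.isLt
  rw [Nat.even_iff] at hn
  rcases h with h | ⟨h1, h2⟩
  · have : u.val % 6 = 0 ∨ u.val % 6 = 1 ∨ u.val % 6 = 2 ∨ u.val % 6 = 3 ∨ u.val % 6 = 4 ∨
        u.val % 6 = 5 := by omega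
    rcases this with h0 | h0 | h0 | h0 | h0 | h0
    · rw [toV0 u h0, toV1 v (by omega)]
      simp only [attachTriangles, fromRel_adj]
      exact ⟨by simp, Or.inl (by apply Fin.ext; simp only [Fin.val_mk]; omega)⟩
    · rw [toV1 u h0, toV2 v (by omega)]
      simp only [attachTriangles, fromRel_adj]
      refine ⟨by simp, Or.inl (Or.inl (by apply Fin.ext; simp only [Fin.val_mk]; omega))⟩
    · rw [toV2 u h0, toV3 v (by omega)]
      simp only [attachTriangles, fromRel_adj]
      exact ⟨by simp, Or.inl (Or.inr ⟨by omega, by omega, trivial, trivial⟩)⟩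
    · rw [toV3 u h0, toV4 v (by omega)]
      simp only [attachTriangles, fromRel_adj]
      refine ⟨by simp, Or.inl (Or.inl (by apply Fin.ext; simp only [Fin.val_mk]; omega))⟩
    · rw [toV4 u h0, toV5 v (by omega)]
      simp only [attachTriangles, fromRel_adj]
      refine ⟨by simp, Or.inr (by apply Fin.ext; simp only [Fin.val_mk]; omega)⟩
    · rw [toV5 u h0, toV0 v (by omega)]
      simp only [attachTriangles, fromRel_adj]
      refine ⟨by simp [Fin.ext_iff]; omega, Or.inl ?_⟩
      apply hham' hn3 hham
      simp only [Fin.val_mk]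
      rw [Nat.mod_eq_of_lt (by omega)]
      omega
  · have h0 : u.val % 6 = 5 := by omega
    rw [toV5 u h0, toV0 v (by omega)]
    simp only [attachTriangles, fromRel_adj]
    refine ⟨by simp [Fin.ext_iff]; omega, Or.inl ?_⟩
    apply hham' hn3 hham
    simp only [Fin.val_mk]
    have he : 2 * (u.val / 6) + 1 + 1 = n := by omega
    rw [he, Nat.mod_self]
    omega

private lemma nbr_inl {n : ℕ} (G : SimpleGraph (Fin n)) (u : Fin n) :
    (attachTriangles G).neighborSet (Sum.inl u) =
      Sum.inl '' (G.neighborSet u) ∪ {Sum.inr (u, 0), Sum.inr (u, 1)} := by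
  ext b
  cases b with
  | inl v =>
    simp only [mem_neighborSet, attachTriangles, fromRel_adj, Set.mem_union, Set.mem_image,
      Set.mem_insert_iff, Set.mem_singleton_iff]
    constructor
    · rintro ⟨hne, h | h⟩
      · exact Or.inl ⟨v, h, rfl⟩
      · exact Or.inl ⟨v, h.symm, rfl⟩
    · rintro (⟨w, hw, hweq⟩ | h | h)
      · obtain rfl : w = v := by simpa using hweq
        exact ⟨by simp [hw.ne], Or.inl hw⟩
      · simp at h
      · simp at h
  | inr p =>
    obtain ⟨v, j⟩ := p
    simp only [mem_neighborSet, attachTriangles, fromRel_adj, Set.mem_union, Set.mem_image,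
      Set.mem_insert_iff, Set.mem_singleton_iff]
    constructor
    · rintro ⟨hne, h | h⟩
      · subst h
        fin_cases j <;> simp
      · subst h
        fin_cases j <;> simp
    · rintro (⟨w, hw, hweq⟩ | h | h)
      · simp at hweq
      · obtain ⟨rfl, rfl⟩ : v = u ∧ j = 0 := by simpa [Prod.ext_iff] using h
        exact ⟨by simp, Or.inl rfl⟩
      · obtain ⟨rfl, rfl⟩ : v = u ∧ j = 1 := by simpa [Prod.ext_iff] using h
        exact ⟨by simp, Or.inl rfl⟩

private lemma ncard_nbrG {n : ℕ} (G : SimpleGraph (Fin n)) [DecidableRel G.Adj] (u : Fin n) :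
    (G.neighborSet u).ncard = G.degree u := by
  rw [← SimpleGraph.card_neighborSet_eq_degree, Set.ncard_eq_toFinset_card', Set.toFinset_card]

private lemma nbr_inr0 {n : ℕ} (hn : 3 ≤ n) (G : SimpleGraph (Fin n)) (u : Fin n) :
    (attachTriangles G).neighborSet (Sum.inr (u, 0)) ⊆
      {Sum.inl u, Sum.inr (u, 1), Sum.inr (⟨u.val - 1, by omega⟩, 1)} := by
  intro b hb
  simp only [mem_neighborSet, attachTriangles, fromRel_adj] at hb
  obtain ⟨hne, h⟩ := hb
  cases b with
  | inl v =>
    simp only [Set.mem_insert_iff, Set.mem_singleton_iff]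
    rcases h with h | h
    · exact Or.inl (by rw [h])
    · exact Or.inl (by rw [h])
  | inr p =>
    obtain ⟨v, j⟩ := p
    simp only [Set.mem_insert_iff, Set.mem_singleton_iff]
    rcases h with (h | ⟨_, _, h01, _⟩) | (h | ⟨hv2, hval, hj, _⟩)
    · subst h
      have hj0 : j ≠ 0 := fun hj => hne (by rw [hj])
      have hj : j = 1 := by omega
      subst hj; exact Or.inr (Or.inl rfl)
    · exact absurd h01 (by decide)
    · subst h
      have hj0 : j ≠ 0 := fun hj => hne (by rw [hj])
      have hj : j = 1 := by omega
      subst hj; exact Or.inr (Or.inl rfl)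
    · subst hj
      refine Or.inr (Or.inr ?_)
      have hv : v = ⟨u.val - 1, by omega⟩ := Fin.ext (by simp only [Fin.val_mk]; omega)
      rw [hv]

private lemma nbr_inr1 {n : ℕ} (hn : 3 ≤ n) (G : SimpleGraph (Fin n)) (u : Fin n) :
    (attachTriangles G).neighborSet (Sum.inr (u, 1)) ⊆
      {Sum.inl u, Sum.inr (u, 0),
        Sum.inr (⟨(u.val + 1) % n, Nat.mod_lt _ (by omega)⟩, 0)} := by
  intro b hb
  simp only [mem_neighborSet, attachTriangles, fromRel_adj] at hb
  obtain ⟨hne, h⟩ := hb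
  cases b with
  | inl v =>
    simp only [Set.mem_insert_iff, Set.mem_singleton_iff]
    rcases h with h | h
    · exact Or.inl (by rw [h])
    · exact Or.inl (by rw [h])
  | inr p =>
    obtain ⟨v, j⟩ := p
    simp only [Set.mem_insert_iff, Set.mem_singleton_iff]
    rcases h with (h | ⟨hu2, hval, _, hj⟩) | (h | ⟨_, _, _, h10⟩)
    · subst h
      have hj0 : j ≠ 1 := fun hj => hne (by rw [hj])
      have hj : j = 0 := by omega
      subst hj; exact Or.inr (Or.inl rfl)
    · subst hj
      refine Or.inr (Or.inr ?_)
      have hvlt := v.isLt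
      have hv : v = ⟨(u.val + 1) % n, Nat.mod_lt _ (by omega)⟩ := by
        apply Fin.ext
        simp only [Fin.val_mk]
        rw [Nat.mod_eq_of_lt (by omega)]
        omega
      rw [hv]
    · subst h
      have hj0 : j ≠ 1 := fun hj => hne (by rw [hj])
      have hj : j = 0 := by omega
      subst hj; exact Or.inr (Or.inl rfl)
    · exact absurd h10 (by decide)

private lemma ncard_triple_le {α : Type*} (x y z : α) : ({x, y, z} : Set α).ncard ≤ 3 := by
  refine le_trans (Set.ncard_insert_le _ _) ?_
  have h := Set.ncard_insert_le y ({z} : Set α)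
  simp only [Set.ncard_singleton] at h
  omega

/-- If `G` has the Hamiltonian cycle `v_0 v_1 ⋯ v_{n-1} v_0` and `n` is even, then
`G'` is Hamiltonian and its maximum degree is at most `Δ(G) + 2`. -/
theorem stmt_13 (n : ℕ) (hn3 : 3 ≤ n) (hn : Even n) (G : SimpleGraph (Fin n))
    [DecidableRel G.Adj] (hham : ∀ i : Fin n, G.Adj i (i + ⟨1, by omega⟩)) :
    (attachTriangles G).IsHamiltonian ∧
    ∀ a : Fin n ⊕ Fin n × Fin 2,
      ((attachTriangles G).neighborSet a).ncard ≤ G.maxDegree + 2 := by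
  constructor
  · intro _
    obtain ⟨a, p, hp⟩ := cycleGraph_hamCycle (3 * n) (by omega)
    have hmap : ∀ u v : Fin (3 * n), (cycleGraph (3 * n)).Adj u v →
        (attachTriangles G).Adj (toV u) (toV v) := by
      intro u v huv
      rw [cycleGraph_adj'] at huv
      rcases huv with h | h
      · exact (adj_toV_succ hn3 hn hham v u (fin_sub_one_cases u v h)).symm
      · exact adj_toV_succ hn3 hn hham u v (fin_sub_one_cases v u h)
    let f : cycleGraph (3 * n) →g attachTriangles G := ⟨toV, fun h => hmap _ _ h⟩
    exact ⟨toV a, p.map f, Walk.IsHamiltonianCycle.map (f := f) toV_bijective hp⟩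
  · intro a
    have hadj0 : G.Adj ⟨0, by omega⟩ (⟨0, by omega⟩ + ⟨1, by omega⟩) := hham _
    have hdeg : 0 < G.degree ⟨0, by omega⟩ := by
      rw [SimpleGraph.degree_pos_iff_exists_adj]
      exact ⟨_, hadj0⟩
    have hmax1 : 1 ≤ G.maxDegree := le_trans hdeg (G.degree_le_maxDegree _)
    cases a with
    | inl u =>
      rw [nbr_inl]
      have h1 := Set.ncard_union_le (Sum.inl '' (G.neighborSet u))
        ({Sum.inr (u, 0), Sum.inr (u, 1)} : Set (Fin n ⊕ Fin n × Fin 2))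
      have h2 : ((Sum.inl '' (G.neighborSet u)) : Set (Fin n ⊕ Fin n × Fin 2)).ncard = G.degree u := by
        rw [Set.ncard_image_of_injective _ Sum.inl_injective, ncard_nbrG]
      have h3 : ({Sum.inr (u, 0), Sum.inr (u, 1)} : Set (Fin n ⊕ Fin n × Fin 2)).ncard ≤ 2 :=
        le_trans (Set.ncard_insert_le _ _) (by simp)
      have h4 := G.degree_le_maxDegree u
      omega
    | inr p =>
      obtain ⟨u, i⟩ := p
      have hi : i = 0 ∨ i = 1 := by omega
      rcases hi with rfl | rfl
      · have hs := Set.ncard_le_ncard (nbr_inr0 hn3 G u) (Set.toFinite _)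
        have h3 := ncard_triple_le (Sum.inl u : Fin n ⊕ Fin n × Fin 2) (Sum.inr (u, 1))
          (Sum.inr (⟨u.val - 1, by omega⟩, 1))
        omega
      · have hs := Set.ncard_le_ncard (nbr_inr1 hn3 G u) (Set.toFinite _)
        have h3 := ncard_triple_le (Sum.inl u : Fin n ⊕ Fin n × Fin 2) (Sum.inr (u, 0))
          (Sum.inr (⟨(u.val + 1) % n, Nat.mod_lt _ (by omega)⟩, 0))
        omega

end AuxStmt13
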